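/- With S, T finite sets, P a nonempty set of probability mass functions on S × T, g : S → ℝ nonnegative, f : T → ℝ, suppose inf_{p ∈ P} E_p[g] = 0 but sup_{p ∈ P} E_p[g] > 0. Then G(μ) = inf_{p ∈ P} E_p[g(s)(f(t) − μ)] has a maximum root μ*, G(μ) = 0 for every μ ≤ μ*, and G is strictly decreasing on (μ*, ∞). -/

import Mathlib

/-- A probability mass function on a finite type. -/
def IsPMF {α : Type*} [Fintype α] (p : α → ℝ) : Prop :=
  (∀ x, 0 ≤ p x) ∧ ∑ x, p x = 1

/-- The function `G(μ) = inf_{p ∈ P} E_p[g(s)(f(t) − μ)]`. -/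
noncomputable def GBR {S T : Type*} [Fintype S] [Fintype T]
    (P : Set (S × T → ℝ)) (g : S → ℝ) (f : T → ℝ) (μ : ℝ) : ℝ :=
  sInf ((fun p => ∑ x : S × T, p x * (g x.1 * (f x.2 - μ))) '' P)

/-- If the lower expectation of `g` is zero but its upper expectation is positive, then `G`
has a maximum root `μ*`, equals zero for all `μ ≤ μ*`, and is strictly decreasing on `(μ*, ∞)`. -/
theorem GBR_max_root {S T : Type*} [Fintype S] [Fintype T]
    (P : Set (S × T → ℝ)) (hPne : P.Nonempty) (hP : ∀ p ∈ P, IsPMF p)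
    (g : S → ℝ) (hg : ∀ s, 0 ≤ g s) (f : T → ℝ)
    (hlow : sInf ((fun p => ∑ x : S × T, p x * g x.1) '' P) = 0)
    (hup : 0 < sSup ((fun p => ∑ x : S × T, p x * g x.1) '' P)) :
    ∃ μs : ℝ, IsGreatest {μ : ℝ | 0 ≤ GBR P g f μ} μs ∧
      (∀ μ ≤ μs, GBR P g f μ = 0) ∧
      StrictAntiOn (GBR P g f) (Set.Ioi μs) := by
  classical
  set Eg : (S × T → ℝ) → ℝ := fun p => ∑ x : S × T, p x * g x.1 with hEgdef
  set Egf : (S × T → ℝ) → ℝ := fun p => ∑ x : S × T, p x * (g x.1 * f x.2) with hEgfdef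
  have hterm : ∀ (p : S × T → ℝ) (μ : ℝ),
      ∑ x : S × T, p x * (g x.1 * (f x.2 - μ)) = Egf p - μ * Eg p := by
    intro p μ
    simp only [hEgfdef, hEgdef, Finset.mul_sum]
    rw [← Finset.sum_sub_distrib]
    exact Finset.sum_congr rfl fun x _ => by ring
  have hGBR : ∀ μ, GBR P g f μ = sInf ((fun p => Egf p - μ * Eg p) '' P) := by
    intro μ; unfold GBR; simp only [hterm]
  -- nonemptiness of S and T
  obtain ⟨p₁, hp₁⟩ := hPne
  have hSTne : Nonempty (S × T) := by
    by_contra h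
    rw [not_nonempty_iff] at h
    have h1 := (hP p₁ hp₁).2
    simp at h1
  have hTne : Nonempty T := ⟨(Classical.arbitrary (S × T)).2⟩
  have hSne : Nonempty S := ⟨(Classical.arbitrary (S × T)).1⟩
  -- bounds
  set M : ℝ := (Finset.univ : Finset T).sup' Finset.univ_nonempty (fun t => |f t|) with hMdef
  have hM : ∀ t, |f t| ≤ M := fun t => Finset.le_sup' (fun t => |f t|) (Finset.mem_univ t)
  have hM0 : 0 ≤ M := le_trans (abs_nonneg _) (hM (Classical.arbitrary T))
  set K : ℝ := (Finset.univ : Finset S).sup' Finset.univ_nonempty g with hKdef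
  have hK : ∀ s, g s ≤ K := fun s => Finset.le_sup' g (Finset.mem_univ s)
  have hK0 : 0 ≤ K := le_trans (hg (Classical.arbitrary S)) (hK (Classical.arbitrary S))
  have hEg0 : ∀ p ∈ P, 0 ≤ Eg p := by
    intro p hp
    exact Finset.sum_nonneg fun x _ => mul_nonneg ((hP p hp).1 x) (hg x.1)
  have hEgK : ∀ p ∈ P, Eg p ≤ K := by
    intro p hp
    calc Eg p ≤ ∑ x : S × T, p x * K :=
          Finset.sum_le_sum fun x _ => mul_le_mul_of_nonneg_left (hK x.1) ((hP p hp).1 x)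
      _ = K := by rw [← Finset.sum_mul, (hP p hp).2, one_mul]
  have hbound : ∀ p ∈ P, |Egf p| ≤ M * Eg p := by
    intro p hp
    calc |Egf p| ≤ ∑ x : S × T, |p x * (g x.1 * f x.2)| := Finset.abs_sum_le_sum_abs _ _
      _ ≤ ∑ x : S × T, p x * g x.1 * M := by
          apply Finset.sum_le_sum
          intro x _
          rw [abs_mul, abs_mul, abs_of_nonneg ((hP p hp).1 x), abs_of_nonneg (hg x.1)]
          rw [mul_assoc]
          exact mul_le_mul_of_nonneg_left
            (mul_le_mul_of_nonneg_left (hM x.2) (hg x.1)) ((hP p hp).1 x)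
      _ = M * Eg p := by rw [← Finset.sum_mul, hEgdef]; ring
  -- boundedness below of the defining set of G
  have hBdd : ∀ μ : ℝ, BddBelow ((fun p => Egf p - μ * Eg p) '' P) := by
    intro μ
    refine ⟨-(M + |μ|) * K, ?_⟩
    rintro w ⟨p, hp, rfl⟩
    have h1 := hbound p hp
    have h2 := hEg0 p hp
    have h3 := hEgK p hp
    have h4 : μ * Eg p ≤ |μ| * Eg p := mul_le_mul_of_nonneg_right (le_abs_self μ) h2
    have h5 : -|Egf p| ≤ Egf p := neg_abs_le _
    have h6 : (0:ℝ) ≤ |μ| := abs_nonneg μ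
    show -(M + |μ|) * K ≤ Egf p - μ * Eg p
    nlinarith
  have hmemG : ∀ μ : ℝ, ∀ p ∈ P, GBR P g f μ ≤ Egf p - μ * Eg p := by
    intro μ p hp
    rw [hGBR]
    exact csInf_le (hBdd μ) (Set.mem_image_of_mem _ hp)
  have hGne : ∀ μ : ℝ, ((fun p => Egf p - μ * Eg p) '' P).Nonempty :=
    fun μ => ⟨_, Set.mem_image_of_mem _ hp₁⟩
  -- G(μ) ≤ 0 everywhere
  have hGle0 : ∀ μ : ℝ, GBR P g f μ ≤ 0 := by
    intro μ
    refine le_of_forall_pos_le_add ?_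
    intro ε hε
    have hpos : (0:ℝ) < ε / (M + |μ| + 1) := by positivity
    have hlt : sInf ((fun p => ∑ x : S × T, p x * g x.1) '' P) < ε / (M + |μ| + 1) := by
      rw [hlow]; exact hpos
    obtain ⟨w, ⟨p, hp, rfl⟩, hw⟩ := exists_lt_of_csInf_lt ⟨_, Set.mem_image_of_mem _ hp₁⟩ hlt
    have hEgsmall : Eg p < ε / (M + |μ| + 1) := hw
    have h1 := hbound p hp
    have h2 := hEg0 p hp
    have h4 : -(μ * Eg p) ≤ |μ| * Eg p := by
      have := mul_le_mul_of_nonneg_right (neg_le_abs μ) h2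
      linarith [this]
    have h5 : Egf p ≤ |Egf p| := le_abs_self _
    have hle : GBR P g f μ ≤ Egf p - μ * Eg p := hmemG μ p hp
    have hd : (M + |μ|) * Eg p < (M + |μ| + 1) * (ε / (M + |μ| + 1)) := by
      have hpos2 : (0:ℝ) < M + |μ| + 1 := by positivity
      have : (M + |μ|) * Eg p ≤ (M + |μ| + 1) * Eg p := by nlinarith [abs_nonneg μ]
      calc (M + |μ|) * Eg p ≤ (M + |μ| + 1) * Eg p := this
        _ < (M + |μ| + 1) * (ε / (M + |μ| + 1)) := by
            exact mul_lt_mul_of_pos_left hEgsmall hpos2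
    have heq : (M + |μ| + 1) * (ε / (M + |μ| + 1)) = ε := by
      field_simp
    nlinarith
  -- a p with positive Eg
  obtain ⟨w₀, ⟨p₀, hp₀, rfl⟩, hw₀⟩ :=
    exists_lt_of_lt_csSup ⟨_, Set.mem_image_of_mem (fun p => ∑ x : S × T, p x * g x.1) hp₁⟩ hup
  have hEgp₀ : 0 < Eg p₀ := hw₀
  -- the set of ratios and μ*
  set C : Set ℝ := (fun p => Egf p / Eg p) '' {p | p ∈ P ∧ 0 < Eg p} with hCdef
  have hCne : C.Nonempty := ⟨_, ⟨p₀, ⟨hp₀, hEgp₀⟩, rfl⟩⟩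
  have hCbdd : BddBelow C := by
    refine ⟨-M, ?_⟩
    rintro w ⟨p, ⟨hp, hEgp⟩, rfl⟩
    rw [le_div_iff₀ hEgp]
    have := neg_abs_le (Egf p)
    nlinarith [hbound p hp]
  set μs : ℝ := sInf C with hμsdef
  -- for μ ≤ μs : 0 ≤ G(μ)
  have hge0 : ∀ μ ≤ μs, 0 ≤ GBR P g f μ := by
    intro μ hμ
    rw [hGBR]
    refine le_csInf (hGne μ) ?_
    rintro w ⟨p, hp, rfl⟩
    show (0:ℝ) ≤ Egf p - μ * Eg p
    rcases lt_or_eq_of_le (hEg0 p hp) with hpos | hzero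
    · have hrat : μs ≤ Egf p / Eg p := csInf_le hCbdd ⟨p, ⟨hp, hpos⟩, rfl⟩
      have : μ ≤ Egf p / Eg p := le_trans hμ hrat
      rw [le_div_iff₀ hpos] at this
      linarith
    · have h1 := hbound p hp
      rw [← hzero] at h1
      simp at h1
      rw [h1, ← hzero]
      simp
  -- greatest
  have hgreat : ∀ μ : ℝ, 0 ≤ GBR P g f μ → μ ≤ μs := by
    intro μ hμ
    refine le_csInf hCne ?_
    rintro w ⟨p, ⟨hp, hEgp⟩, rfl⟩
    have := hmemG μ p hp
    rw [le_div_iff₀ hEgp]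
    linarith
  -- G(μ) < 0 for μ > μs
  have hneg : ∀ μ : ℝ, μs < μ → GBR P g f μ < 0 := by
    intro μ hμ
    obtain ⟨w, ⟨p, ⟨hp, hEgp⟩, rfl⟩, hwlt⟩ := exists_lt_of_csInf_lt hCne hμ
    have hle := hmemG μ p hp
    rw [div_lt_iff₀ hEgp] at hwlt
    linarith
  -- concavity
  have hconc : ∀ x y l : ℝ, 0 ≤ l → l ≤ 1 →
      l * GBR P g f x + (1 - l) * GBR P g f y ≤ GBR P g f (l * x + (1 - l) * y) := by
    intro x y l hl0 hl1
    rw [hGBR (l * x + (1 - l) * y)]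
    refine le_csInf (hGne _) ?_
    rintro w ⟨p, hp, rfl⟩
    have hx := hmemG x p hp
    have hy := hmemG y p hp
    have h1 := mul_le_mul_of_nonneg_left hx hl0
    have h2 := mul_le_mul_of_nonneg_left hy (by linarith : (0:ℝ) ≤ 1 - l)
    have h3 : l * (Egf p - x * Eg p) + (1 - l) * (Egf p - y * Eg p)
        = Egf p - (l * x + (1 - l) * y) * Eg p := by ring
    show l * GBR P g f x + (1 - l) * GBR P g f y ≤ Egf p - (l * x + (1 - l) * y) * Eg p
    linarith
  refine ⟨μs, ⟨hge0 μs le_rfl, fun μ hμ => hgreat μ hμ⟩, ?_, ?_⟩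
  · intro μ hμ
    exact le_antisymm (hGle0 μ) (hge0 μ hμ)
  · intro a ha b hb hab
    simp only [Set.mem_Ioi] at ha hb
    have hGb := hneg b hb
    set l : ℝ := (b - a) / (b - μs) with hldef
    have hbμ : 0 < b - μs := by linarith
    have hl0 : 0 < l := div_pos (by linarith) hbμ
    have hl1 : l ≤ 1 := by
      rw [div_le_one hbμ]; linarith
    have hcomb : l * μs + (1 - l) * b = a := by
      field_simp [hldef]
      rw [hldef]; field_simp; ring
    have hGμs : GBR P g f μs = 0 := le_antisymm (hGle0 μs) (hge0 μs le_rfl)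
    have := hconc μs b l (le_of_lt hl0) hl1
    rw [hcomb, hGμs] at this
    nlinarith
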